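/- arXiv:2402.18129 — 2 statements merged into one kernel-verified Lean document; each statement's English description precedes it below -/
import Mathlib

section
/- Suppose there exist functions φ_L, φ_U : 𝒳 × 𝒴 → ℝ such that φ_L(x,y) ≤ P(X=x | Y=y, S=s) / P(X=x | S=s) ≤ φ_U(x,y) for all x ∈ 𝒳, y ∈ 𝒴, s ∈ 𝒮, and set Δ(x,y) = φ_U(x,y) − φ_L(x,y). Fix s_max ∈ 𝒮 and define the conditional distribution Q̃(ŷ | x, s) := P(Y=ŷ | X=x, S=s_max), and let Q̃_{Ŷ|S=s}(ŷ) = ∑_x P(X=x | S=s) Q̃(ŷ | x, s) be the induced conditional distribution of Ŷ given S=s. Then: E_{s∼P_S}[ TV(Q̃_{Ŷ|S=s}, P_{Y|S=s_max}) ] ≤ E_{x∼P_X, y∼P_{Y|S=s_max}}[ Δ(x, y) ], where the expectation on the right is under the product of the marginal of X and the conditional of Y given S=s_max. -/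
open Finset

noncomputable section

variable {𝒳 𝒴 𝒮 : Type*} [Fintype 𝒳] [Fintype 𝒴] [Fintype 𝒮]

/-- Total variation distance between two finitely supported distributions on `𝒴`,
`TV(p, q) = (1/2) ∑ y, |p y - q y|`. -/
def TV (p q : 𝒴 → ℝ) : ℝ := (1 / 2) * ∑ y, |p y - q y|

/-- Marginal distribution of `(X, S)` under the joint `P` of `(X, Y, S)`. -/
def margXS (P : 𝒳 → 𝒴 → 𝒮 → ℝ) (x : 𝒳) (s : 𝒮) : ℝ := ∑ y, P x y s

/-- Marginal distribution of `(Y, S)`. -/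
def margYS (P : 𝒳 → 𝒴 → 𝒮 → ℝ) (y : 𝒴) (s : 𝒮) : ℝ := ∑ x, P x y s

/-- Marginal distribution of `S`. -/
def margS (P : 𝒳 → 𝒴 → 𝒮 → ℝ) (s : 𝒮) : ℝ := ∑ x, margXS P x s

/-- Marginal distribution of `X`. -/
def margX (P : 𝒳 → 𝒴 → 𝒮 → ℝ) (x : 𝒳) : ℝ := ∑ s, margXS P x s

/-- Conditional distribution of `Y` given `X = x, S = s`. -/
def condYXS (P : 𝒳 → 𝒴 → 𝒮 → ℝ) (x : 𝒳) (s : 𝒮) (y : 𝒴) : ℝ := P x y s / margXS P x s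

/-- Conditional distribution of `Y` given `S = s`. -/
def condYS (P : 𝒳 → 𝒴 → 𝒮 → ℝ) (s : 𝒮) (y : 𝒴) : ℝ := margYS P y s / margS P s

/-- The ratio `P(X=x | Y=y, S=s) / P(X=x | S=s)`. -/
def condRatio (P : 𝒳 → 𝒴 → 𝒮 → ℝ) (x : 𝒳) (y : 𝒴) (s : 𝒮) : ℝ :=
  (P x y s / margYS P y s) / (margXS P x s / margS P s)

/-- A conditional distribution `Q`: for every `(x, s)`, `Q x s` is a probability
distribution on labels. -/
def IsRule (Q : 𝒳 → 𝒮 → 𝒴 → ℝ) : Prop :=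
  (∀ x s y, 0 ≤ Q x s y) ∧ ∀ x s, ∑ y, Q x s y = 1

/-- The generalized objective: `E_{(x,s)∼P_{X,S}}[TV(Q_{Ŷ|X=x,S=s}, P_{Y|X=x,S=s})]`. -/
def objective (P : 𝒳 → 𝒴 → 𝒮 → ℝ) (Q : 𝒳 → 𝒮 → 𝒴 → ℝ) : ℝ :=
  ∑ x, ∑ s, margXS P x s * TV (Q x s) (condYXS P x s)

/-- Joint distribution of `(Ŷ, S)` induced by `Q · P_{X,S}`. -/
def jointYhatS (P : 𝒳 → 𝒴 → 𝒮 → ℝ) (Q : 𝒳 → 𝒮 → 𝒴 → ℝ) (yh : 𝒴) (s : 𝒮) : ℝ :=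
  ∑ x, margXS P x s * Q x s yh

/-- Marginal distribution of the prediction `Ŷ`. -/
def margYhat (P : 𝒳 → 𝒴 → 𝒮 → ℝ) (Q : 𝒳 → 𝒮 → 𝒴 → ℝ) (yh : 𝒴) : ℝ :=
  ∑ s, jointYhatS P Q yh s

/-- Conditional distribution of the prediction `Ŷ` given `S = s`. -/
def condYhatS (P : 𝒳 → 𝒴 → 𝒮 → ℝ) (Q : 𝒳 → 𝒮 → 𝒴 → ℝ) (s : 𝒮) (yh : 𝒴) : ℝ :=
  jointYhatS P Q yh s / margS P s

/-- The conditional distribution `Q̃(ŷ | x, s) := P(Y=ŷ | X=x, S=s_max)`. -/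
def Qtilde (P : 𝒳 → 𝒴 → 𝒮 → ℝ) (smax : 𝒮) (x : 𝒳) (s : 𝒮) (yh : 𝒴) : ℝ :=
  condYXS P x smax yh

/-- Conditional distribution of the prediction `Ŷ` given `S = s` induced by `Q̃`:
`Q̃_{Ŷ|S=s}(ŷ) = ∑_x P(X=x|S=s) Q̃(ŷ|x,s)`. -/
def QtildeCondS (P : 𝒳 → 𝒴 → 𝒮 → ℝ) (smax : 𝒮) (s : 𝒮) (yh : 𝒴) : ℝ :=
  ∑ x, (margXS P x s / margS P s) * Qtilde P smax x s yh

/-- If `φ_L(x,y) ≤ P(x|y,s)/P(x|s) ≤ φ_U(x,y)` and `Δ = φ_U - φ_L`, then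
`E_{s∼P_S}[TV(Q̃_{Ŷ|S=s}, P_{Y|S=s_max})] ≤ E_{x∼P_X, y∼P_{Y|S=s_max}}[Δ(x, y)]`. -/
theorem qtilde_conditional_tv_bound
    (P : 𝒳 → 𝒴 → 𝒮 → ℝ)
    (hP0 : ∀ x y s, 0 ≤ P x y s)
    (hP1 : ∑ x, ∑ y, ∑ s, P x y s = 1)
    (hXS : ∀ x s, 0 < margXS P x s)
    (hYS : ∀ y s, 0 < margYS P y s)
    (φL φU : 𝒳 → 𝒴 → ℝ)
    (hL : ∀ x y s, φL x y ≤ condRatio P x y s)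
    (hU : ∀ x y s, condRatio P x y s ≤ φU x y)
    (smax : 𝒮) :
    ∑ s, margS P s * TV (QtildeCondS P smax s) (condYS P smax)
      ≤ ∑ x, ∑ y, margX P x * condYS P smax y * (φU x y - φL x y) :=
  by
  cases isEmpty_or_nonempty 𝒳 with
  | inl h => simp at hP1
  | inr h =>
  have hS : ∀ s, 0 < margS P s := fun s =>
    Finset.sum_pos (fun x _ => hXS x s) Finset.univ_nonempty
  have hcys : ∀ y, 0 ≤ condYS P smax y := fun y =>
    div_nonneg (le_of_lt (hYS y smax)) (le_of_lt (hS smax))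
  have fact1 : ∀ x y, condYXS P x smax y = condRatio P x y smax * condYS P smax y := by
    intro x y
    unfold condYXS condRatio condYS
    field_simp [(hXS x smax).ne', (hYS y smax).ne', (hS smax).ne']
  have fact2 : ∀ y s, ∑ x, margXS P x s * condRatio P x y s = margS P s := by
    intro y s
    have h1 : ∀ x, margXS P x s * condRatio P x y s
        = P x y s * (margS P s / margYS P y s) := by
      intro x
      unfold condRatio
      field_simp [(hXS x s).ne', (hYS y s).ne', (hS s).ne']
    rw [Finset.sum_congr rfl (fun x _ => h1 x), ← Finset.sum_mul]
    have : (∑ x, P x y s) = margYS P y s := rfl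
    rw [this]
    field_simp [(hYS y s).ne']
  have key : ∀ s y, margS P s * (QtildeCondS P smax s y - condYS P smax y)
      = ∑ x, margXS P x s * (condRatio P x y smax - condRatio P x y s)
          * condYS P smax y := by
    intro s y
    have hA : margS P s * QtildeCondS P smax s y
        = ∑ x, margXS P x s * condRatio P x y smax * condYS P smax y := by
      unfold QtildeCondS Qtilde
      rw [Finset.mul_sum]
      refine Finset.sum_congr rfl fun x _ => ?_
      rw [fact1 x y]
      field_simp [(hS s).ne']
    have hB : margS P s * condYS P smax y
        = ∑ x, margXS P x s * condRatio P x y s * condYS P smax y := by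
      rw [← Finset.sum_mul, fact2 y s]
    rw [mul_sub, hA, hB, ← Finset.sum_sub_distrib]
    exact Finset.sum_congr rfl fun x _ => by ring
  -- pointwise bound on each s-term
  have hΔ : ∀ x y, 0 ≤ φU x y - φL x y := fun x y =>
    sub_nonneg.mpr (le_trans (hL x y smax) (hU x y smax))
  have step : ∀ s, margS P s * TV (QtildeCondS P smax s) (condYS P smax)
      ≤ (1 / 2) * ∑ y, ∑ x, margXS P x s * (φU x y - φL x y) * condYS P smax y := by
    intro s
    unfold TV
    rw [← mul_assoc, mul_comm (margS P s) (1/2 : ℝ), mul_assoc, Finset.mul_sum]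
    refine mul_le_mul_of_nonneg_left ?_ (by norm_num)
    refine Finset.sum_le_sum fun y _ => ?_
    rw [← abs_of_pos (hS s), ← abs_mul, key s y]
    calc |∑ x, margXS P x s * (condRatio P x y smax - condRatio P x y s)
            * condYS P smax y|
        ≤ ∑ x, |margXS P x s * (condRatio P x y smax - condRatio P x y s)
            * condYS P smax y| := Finset.abs_sum_le_sum_abs _ _
      _ ≤ ∑ x, margXS P x s * (φU x y - φL x y) * condYS P smax y := by
          refine Finset.sum_le_sum fun x _ => ?_
          rw [abs_mul, abs_mul, abs_of_pos (hXS x s), abs_of_nonneg (hcys y)]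
          refine mul_le_mul_of_nonneg_right ?_ (hcys y)
          refine mul_le_mul_of_nonneg_left ?_ (le_of_lt (hXS x s))
          rw [abs_sub_le_iff]
          constructor
          · linarith [hU x y smax, hL x y s]
          · linarith [hU x y s, hL x y smax]
  calc ∑ s, margS P s * TV (QtildeCondS P smax s) (condYS P smax)
      ≤ ∑ s, (1 / 2) * ∑ y, ∑ x, margXS P x s * (φU x y - φL x y) * condYS P smax y :=
        Finset.sum_le_sum fun s _ => step s
    _ = (1 / 2) * ∑ x, ∑ y, margX P x * condYS P smax y * (φU x y - φL x y) := by
        rw [← Finset.mul_sum]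
        congr 1
        have hxy : ∀ x y, ∑ s, margXS P x s * (φU x y - φL x y) * condYS P smax y
            = margX P x * condYS P smax y * (φU x y - φL x y) := by
          intro x y
          rw [← Finset.sum_mul, ← Finset.sum_mul]
          have : (∑ s, margXS P x s) = margX P x := rfl
          rw [this]; ring
        calc ∑ s, ∑ y, ∑ x, margXS P x s * (φU x y - φL x y) * condYS P smax y
            = ∑ s, ∑ x, ∑ y, margXS P x s * (φU x y - φL x y) * condYS P smax y :=
              Finset.sum_congr rfl fun s _ => Finset.sum_comm
          _ = ∑ x, ∑ s, ∑ y, margXS P x s * (φU x y - φL x y) * condYS P smax y :=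
              Finset.sum_comm
          _ = ∑ x, ∑ y, ∑ s, margXS P x s * (φU x y - φL x y) * condYS P smax y :=
              Finset.sum_congr rfl fun x _ => Finset.sum_comm
          _ = ∑ x, ∑ y, margX P x * condYS P smax y * (φU x y - φL x y) :=
              Finset.sum_congr rfl fun x _ => Finset.sum_congr rfl fun y _ => hxy x y
    _ ≤ ∑ x, ∑ y, margX P x * condYS P smax y * (φU x y - φL x y) := by
        have hnn : 0 ≤ ∑ x, ∑ y, margX P x * condYS P smax y * (φU x y - φL x y) := by
          refine Finset.sum_nonneg fun x _ => Finset.sum_nonneg fun y _ => ?_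
          have hmx : 0 ≤ margX P x :=
            Finset.sum_nonneg fun s _ => le_of_lt (hXS x s)
          exact mul_nonneg (mul_nonneg hmx (hcys y)) (hΔ x y)
        linarith
end
end

section
/- Suppose there exist functions φ_L, φ_U : 𝒳 × 𝒴 → ℝ such that φ_L(x,y) ≤ P(X=x | Y=y, S=s) / P(X=x | S=s) ≤ φ_U(x,y) for all x ∈ 𝒳, y ∈ 𝒴, s ∈ 𝒮, and set Δ(x,y) = φ_U(x,y) − φ_L(x,y). Fix s_max ∈ 𝒮 and define the conditional distribution Q̃(ŷ | x, s) := P(Y=ŷ | X=x, S=s_max), and let Q̃_Ŷ(ŷ) = ∑_{x,s} P(X=x, S=s) Q̃(ŷ | x, s) be the induced marginal distribution of Ŷ. Then: TV(P_{Y|S=s_max}, Q̃_Ŷ) ≤ E_{x∼P_X, y∼P_{Y|S=s_max}}[ Δ(x, y) ], where the expectation is under the product of the marginal of X and the conditional of Y given S=s_max. -/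
open Finset

noncomputable section

variable {𝒳 𝒴 𝒮 : Type*} [Fintype 𝒳] [Fintype 𝒴] [Fintype 𝒮]

/-- Marginal distribution of the prediction `Ŷ` induced by `Q̃`:
`Q̃_Ŷ(ŷ) = ∑_{x,s} P(X=x, S=s) Q̃(ŷ|x,s)`. -/
def QtildeMarg (P : 𝒳 → 𝒴 → 𝒮 → ℝ) (smax : 𝒮) (yh : 𝒴) : ℝ :=
  ∑ x, ∑ s, margXS P x s * Qtilde P smax x s yh

/-- If `φ_L(x,y) ≤ P(x|y,s)/P(x|s) ≤ φ_U(x,y)` and `Δ = φ_U - φ_L`, then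
`TV(P_{Y|S=s_max}, Q̃_Ŷ) ≤ E_{x∼P_X, y∼P_{Y|S=s_max}}[Δ(x, y)]`. -/
theorem qtilde_marginal_tv_bound
    (P : 𝒳 → 𝒴 → 𝒮 → ℝ)
    (hP0 : ∀ x y s, 0 ≤ P x y s)
    (hP1 : ∑ x, ∑ y, ∑ s, P x y s = 1)
    (hXS : ∀ x s, 0 < margXS P x s)
    (hYS : ∀ y s, 0 < margYS P y s)
    (φL φU : 𝒳 → 𝒴 → ℝ)
    (hL : ∀ x y s, φL x y ≤ condRatio P x y s)
    (hU : ∀ x y s, condRatio P x y s ≤ φU x y)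
    (smax : 𝒮) :
    TV (condYS P smax) (QtildeMarg P smax)
      ≤ ∑ x, ∑ y, margX P x * condYS P smax y * (φU x y - φL x y) := by
  classical
  have hS : ∀ s, 0 < margS P s := by
    intro s
    have : Nonempty 𝒳 := by
      by_contra h
      rw [not_nonempty_iff] at h
      simp [Finset.univ_eq_empty] at hP1
    exact Finset.sum_pos (fun x _ => hXS x s) Finset.univ_nonempty
  have hSsum : ∑ s, margS P s = 1 := by
    simp only [margS, margXS]
    rw [← hP1, Finset.sum_comm]
    exact Finset.sum_congr rfl fun x _ => Finset.sum_comm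
  have hcYS : ∀ y, 0 < condYS P smax y := fun y =>
    div_pos (hYS y smax) (hS smax)
  have hXSne : ∀ x s, margXS P x s ≠ 0 := fun x s => ne_of_gt (hXS x s)
  have hYSne : ∀ y s, margYS P y s ≠ 0 := fun y s => ne_of_gt (hYS y s)
  have hSne : ∀ s, margS P s ≠ 0 := fun s => ne_of_gt (hS s)
  have hmargX : ∀ x, 0 ≤ margX P x := fun x =>
    Finset.sum_nonneg fun s _ => (hXS x s).le
  have key : ∀ y, condYS P smax y - QtildeMarg P smax y
      = ∑ x, ∑ s, margXS P x s * condYS P smax y *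
          (condRatio P x y s - condRatio P x y smax) := by
    intro y
    have h1 : ∑ x, ∑ s, margXS P x s * condYS P smax y * condRatio P x y s
        = condYS P smax y := by
      have term : ∀ x s, margXS P x s * condYS P smax y * condRatio P x y s
          = condYS P smax y * (margS P s * (P x y s / margYS P y s)) := by
        intro x s
        unfold condRatio
        field_simp [hXSne x s, hYSne y s, hSne s]
      simp only [term]
      rw [Finset.sum_comm]
      have : ∀ s, ∑ x, condYS P smax y * (margS P s * (P x y s / margYS P y s))
          = condYS P smax y * margS P s := by
        intro s
        rw [← Finset.mul_sum]
        congr 1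
        rw [← Finset.mul_sum, ← Finset.sum_div]
        have : (∑ x, P x y s) = margYS P y s := rfl
        rw [this, div_self (hYSne y s), mul_one]
      simp only [this]
      rw [← Finset.mul_sum, hSsum, mul_one]
    have h2 : ∑ x, ∑ s, margXS P x s * condYS P smax y * condRatio P x y smax
        = QtildeMarg P smax y := by
      have term : ∀ x s, margXS P x s * condYS P smax y * condRatio P x y smax
          = margXS P x s * condYXS P x smax y := by
        intro x s
        unfold condRatio condYS condYXS
        field_simp [hXSne x smax, hYSne y smax, hSne smax]
      simp only [term]
      rfl
    simp only [mul_sub, Finset.sum_sub_distrib]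
    rw [h1, h2]
  have habs : ∀ y, |condYS P smax y - QtildeMarg P smax y|
      ≤ ∑ x, margX P x * condYS P smax y * (φU x y - φL x y) := by
    intro y
    rw [key y]
    calc |∑ x, ∑ s, margXS P x s * condYS P smax y *
            (condRatio P x y s - condRatio P x y smax)|
        ≤ ∑ x, ∑ s, |margXS P x s * condYS P smax y *
            (condRatio P x y s - condRatio P x y smax)| := by
          refine (Finset.abs_sum_le_sum_abs _ _).trans ?_
          exact Finset.sum_le_sum fun x _ => Finset.abs_sum_le_sum_abs _ _
      _ ≤ ∑ x, ∑ s, margXS P x s * condYS P smax y * (φU x y - φL x y) := by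
          refine Finset.sum_le_sum fun x _ => Finset.sum_le_sum fun s _ => ?_
          rw [abs_mul, abs_of_nonneg (mul_nonneg (hXS x s).le (hcYS y).le)]
          refine mul_le_mul_of_nonneg_left ?_
            (mul_nonneg (hXS x s).le (hcYS y).le)
          rw [abs_sub_le_iff]
          constructor
          · linarith [hU x y s, hL x y smax]
          · linarith [hU x y smax, hL x y s]
      _ = ∑ x, margX P x * condYS P smax y * (φU x y - φL x y) := by
          refine Finset.sum_congr rfl fun x _ => ?_
          rw [margX, Finset.sum_mul, Finset.sum_mul]
  have hnn : ∀ y, 0 ≤ ∑ x, margX P x * condYS P smax y * (φU x y - φL x y) := by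
    intro y
    refine Finset.sum_nonneg fun x _ => ?_
    have hΔ : 0 ≤ φU x y - φL x y := by linarith [hL x y smax, hU x y smax]
    exact mul_nonneg (mul_nonneg (hmargX x) (hcYS y).le) hΔ
  rw [TV]
  have h := Finset.sum_le_sum fun y (_ : y ∈ Finset.univ) => habs y
  calc (1/2 : ℝ) * ∑ y, |condYS P smax y - QtildeMarg P smax y|
      ≤ (1/2 : ℝ) * ∑ y, ∑ x, margX P x * condYS P smax y * (φU x y - φL x y) := by
        linarith
    _ ≤ ∑ y, ∑ x, margX P x * condYS P smax y * (φU x y - φL x y) := by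
        have := Finset.sum_nonneg fun y (_ : y ∈ Finset.univ) => hnn y
        linarith
    _ = ∑ x, ∑ y, margX P x * condYS P smax y * (φU x y - φL x y) :=
        Finset.sum_comm
end
end
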